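/- Let U : [−1,1] → ℝ be twice continuously differentiable and let λ ∈ ℝ, γ ∈ ℝ, ε ≥ 0 be constants such that 0 = −U''(1+ε−x²) + 2xU' + 1 + γe^{2U} + 4λ(1+ε−x²)e^{4U} on (−1,1). Then the function F(x) := −(1+ε−x²)²U'² + 2x(1+ε−x²)U' + 2λ e^{4U}(1+ε−x²)² − x² + γ(1+ε−x²)e^{2U} is constant on [−1,1]. -/

import Mathlib

open Real Set MeasureTheory intervalIntegral

/-- If U is C² on [−1,1] and satisfies the Euler–Lagrange equation
0 = −U''(1+ε−x²) + 2xU' + 1 + γe^{2U} + 4λ(1+ε−x²)e^{4U} on (−1,1), then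
F(x) := −(1+ε−x²)²U'² + 2x(1+ε−x²)U' + 2λe^{4U}(1+ε−x²)² − x² + γ(1+ε−x²)e^{2U}
is constant on [−1,1]. -/
theorem stmt_6 (ε lam γ : ℝ) (hε : 0 ≤ ε) (U U' U'' : ℝ → ℝ)
    (hU : ∀ x ∈ Icc (-1:ℝ) 1, HasDerivAt U (U' x) x)
    (hU' : ∀ x ∈ Icc (-1:ℝ) 1, HasDerivAt U' (U'' x) x)
    (hODE : ∀ x ∈ Ioo (-1:ℝ) 1,
      0 = -U'' x * (1 + ε - x^2) + 2 * x * U' x + 1 + γ * Real.exp (2 * U x)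
        + 4 * lam * (1 + ε - x^2) * Real.exp (4 * U x)) :
    ∃ c : ℝ, ∀ x ∈ Icc (-1:ℝ) 1,
      -(1 + ε - x^2)^2 * (U' x)^2 + 2 * x * (1 + ε - x^2) * U' x
        + 2 * lam * Real.exp (4 * U x) * (1 + ε - x^2)^2 - x^2
        + γ * (1 + ε - x^2) * Real.exp (2 * U x) = c := by
  set F : ℝ → ℝ := fun y =>
      -(1 + ε - y^2)^2 * (U' y)^2 + 2 * y * (1 + ε - y^2) * U' y
        + 2 * lam * Real.exp (4 * U y) * (1 + ε - y^2)^2 - y^2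
        + γ * (1 + ε - y^2) * Real.exp (2 * U y) with hFdef
  have hF0 : ∀ x ∈ Ioo (-1:ℝ) 1, HasDerivAt F 0 x := by
    intro x hx
    have hu := hU x (Ioo_subset_Icc_self hx)
    have hp := hU' x (Ioo_subset_Icc_self hx)
    have hA : HasDerivAt (fun y : ℝ => 1 + ε - y^2) (-(2*x)) x := by
      simpa using (hasDerivAt_pow 2 x).const_sub (1+ε)
    have t1 := ((hA.pow 2).neg.mul (hp.pow 2))
    have t2 := (((hasDerivAt_id x).const_mul 2).mul hA).mul hp
    have t3 := (((hu.const_mul 4).exp).const_mul (2*lam)).mul (hA.pow 2)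
    have t4 := hasDerivAt_pow 2 x
    have t5 := (hA.const_mul γ).mul ((hu.const_mul 2).exp)
    have h := ((((t1.add t2).add t3).sub t4).add t5)
    refine h.congr_deriv (Eq.symm ?_)
    have hode := hODE x hx
    push_cast
    simp only [id_eq, Pi.pow_apply, Pi.mul_apply, Pi.neg_apply]
    linear_combination (2*((1+ε-x^2)*U' x - x)) * hode
  have hUc : ContinuousOn U (Icc (-1:ℝ) 1) := fun x hx =>
    (hU x hx).continuousAt.continuousWithinAt
  have hU'c : ContinuousOn U' (Icc (-1:ℝ) 1) := fun x hx =>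
    (hU' x hx).continuousAt.continuousWithinAt
  have hcont : ContinuousOn F (Icc (-1:ℝ) 1) := by
    have hA : ContinuousOn (fun y : ℝ => 1 + ε - y^2) (Icc (-1:ℝ) 1) :=
      continuousOn_const.sub (continuousOn_pow 2)
    have he4 : ContinuousOn (fun y => Real.exp (4 * U y)) (Icc (-1:ℝ) 1) :=
      Real.continuous_exp.comp_continuousOn (continuousOn_const.mul hUc)
    have he2 : ContinuousOn (fun y => Real.exp (2 * U y)) (Icc (-1:ℝ) 1) :=
      Real.continuous_exp.comp_continuousOn (continuousOn_const.mul hUc)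
    exact (((((hA.pow 2).neg.mul (hU'c.pow 2)).add
      (((continuousOn_const.mul continuousOn_id).mul hA).mul hU'c)).add
      (((continuousOn_const.mul he4)).mul (hA.pow 2))).sub (continuousOn_pow 2)).add
      ((continuousOn_const.mul hA).mul he2)
  have hdiff : DifferentiableOn ℝ F (interior (Icc (-1:ℝ) 1)) := by
    rw [interior_Icc]
    exact fun x hx => (hF0 x hx).differentiableAt.differentiableWithinAt
  have hderiv0 : ∀ x ∈ interior (Icc (-1:ℝ) 1), deriv F x = 0 := by
    rw [interior_Icc]; exact fun x hx => (hF0 x hx).deriv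
  have hmono : MonotoneOn F (Icc (-1:ℝ) 1) :=
    monotoneOn_of_deriv_nonneg (convex_Icc _ _) hcont hdiff
      (fun x hx => le_of_eq (hderiv0 x hx).symm)
  have hanti : AntitoneOn F (Icc (-1:ℝ) 1) :=
    antitoneOn_of_deriv_nonpos (convex_Icc _ _) hcont hdiff
      (fun x hx => le_of_eq (hderiv0 x hx))
  refine ⟨F 0, fun x hx => ?_⟩
  have h0 : (0:ℝ) ∈ Icc (-1:ℝ) 1 := by constructor <;> norm_num
  rcases le_total x 0 with h | h
  · exact le_antisymm (hmono hx h0 h) (hanti hx h0 h)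
  · exact le_antisymm (hanti h0 hx h) (hmono h0 hx h)
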